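/- Let (με) be a family of finite signed Radon measures on a bounded open set D ⊆ ℝ³, and suppose ‖με‖_{(C⁰_c(D))*} ≤ M₀(ε) and ‖με‖_{(C^{0,1}_c(D))*} ≤ M₁(ε). Then for every 0 < α < 1 there is a constant C = C(α, D) such that ‖με‖_{(C^{0,α}_c(D))*} ≤ C M₀(ε)^{1−α} M₁(ε)^{α}. -/

import Mathlib

open MeasureTheory

/-- Integral of a function against a signed measure, via its Jordan decomposition. -/
noncomputable def sInt {X : Type*} [MeasurableSpace X]
    (μ : SignedMeasure X) (φ : X → ℝ) : ℝ :=
  (∫ x, φ x ∂μ.toJordanDecomposition.posPart) - ∫ x, φ x ∂μ.toJordanDecomposition.negPart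

namespace JSAux

open Metric

abbrev E3 : Type := (ℝ × ℝ) × ℝ

/-! ### Soft threshold -/

noncomputable def stf (a t : ℝ) : ℝ := max (t - a) 0 + min (t + a) 0

lemma stf_sub_le {a t : ℝ} (ha : 0 ≤ a) : |stf a t - t| ≤ a := by
  unfold stf
  rcases le_total (t - a) 0 with h3 | h3 <;> rcases le_total (t + a) 0 with h4 | h4
  · rw [max_eq_right h3, min_eq_left h4, abs_le]; constructor <;> linarith
  · rw [max_eq_right h3, min_eq_right h4, abs_le]; constructor <;> linarith
  · rw [max_eq_left h3, min_eq_left h4, abs_le]; constructor <;> linarith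
  · rw [max_eq_left h3, min_eq_right h4, abs_le]; constructor <;> linarith

lemma stf_eq_zero {a t : ℝ} (h : |t| ≤ a) : stf a t = 0 := by
  rw [abs_le] at h
  unfold stf
  rw [max_eq_right (by linarith), min_eq_right (by linarith), add_zero]

lemma stf_abs_le {a s t : ℝ} (ha : 0 ≤ a) (h1 : s - a ≤ t) (h2 : t ≤ s) :
    |stf a t| ≤ |s| := by
  have hs1 := le_abs_self s
  have hs2 := neg_abs_le s
  unfold stf
  rcases le_total (t - a) 0 with h3 | h3 <;> rcases le_total (t + a) 0 with h4 | h4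
  · rw [max_eq_right h3, min_eq_left h4, abs_le]; constructor <;> linarith
  · rw [max_eq_right h3, min_eq_right h4, abs_le]; constructor <;> linarith
  · rw [max_eq_left h3, min_eq_left h4, abs_le]; constructor <;> linarith
  · rw [max_eq_left h3, min_eq_right h4, abs_le]; constructor <;> linarith

lemma stf_lip (a t t' : ℝ) : |stf a t - stf a t'| ≤ 2 * |t - t'| := by
  have h1 : |max (t - a) 0 - max (t' - a) 0| ≤ |t - t'| := by
    have := abs_max_sub_max_le_abs (t - a) (t' - a) 0
    simpa using this
  have h2 : |min (t + a) 0 - min (t' + a) 0| ≤ |t - t'| := by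
    have := abs_min_sub_min_le_max (t + a) 0 (t' + a) 0
    simpa using this
  unfold stf
  calc |max (t - a) 0 + min (t + a) 0 - (max (t' - a) 0 + min (t' + a) 0)|
      = |(max (t - a) 0 - max (t' - a) 0) + (min (t + a) 0 - min (t' + a) 0)| := by ring_nf
    _ ≤ |max (t - a) 0 - max (t' - a) 0| + |min (t + a) 0 - min (t' + a) 0| := abs_add_le _ _
    _ ≤ 2 * |t - t'| := by linarith

/-! ### Linearity of `sInt` -/

lemma sInt_const_mul (μ : SignedMeasure E3) (r : ℝ) (f : E3 → ℝ) :
    sInt μ (fun x => r * f x) = r * sInt μ f := by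
  simp only [sInt, integral_const_mul]; ring

lemma sInt_add (μ : SignedMeasure E3) {f g : E3 → ℝ}
    (hf : Continuous f) (hf' : HasCompactSupport f)
    (hg : Continuous g) (hg' : HasCompactSupport g) :
    sInt μ (fun x => f x + g x) = sInt μ f + sInt μ g := by
  have i1 : Integrable f μ.toJordanDecomposition.posPart :=
    hf.integrable_of_hasCompactSupport hf'
  have i2 : Integrable g μ.toJordanDecomposition.posPart :=
    hg.integrable_of_hasCompactSupport hg'
  have i3 : Integrable f μ.toJordanDecomposition.negPart :=
    hf.integrable_of_hasCompactSupport hf'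
  have i4 : Integrable g μ.toJordanDecomposition.negPart :=
    hg.integrable_of_hasCompactSupport hg'
  simp only [sInt, integral_add i1 i2, integral_add i3 i4]; ring

/-! ### Inf-convolution (Lipschitz regularization) -/

noncomputable def infConv (φ : E3 → ℝ) (L : ℝ) (x : E3) : ℝ :=
  ⨅ y : E3, (φ y + L * dist x y)

section infConv
variable {φ : E3 → ℝ} {L m : ℝ}

lemma infConv_bddBelow (hm : ∀ y, m ≤ φ y) (hL : 0 ≤ L) (x : E3) :
    BddBelow (Set.range fun y => φ y + L * dist x y) := by
  refine ⟨m, ?_⟩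
  rintro z ⟨y, rfl⟩
  show m ≤ φ y + L * dist x y
  have h := mul_nonneg hL (dist_nonneg (x := x) (y := y))
  linarith [hm y]

lemma infConv_le (hm : ∀ y, m ≤ φ y) (hL : 0 ≤ L) (x : E3) : infConv φ L x ≤ φ x := by
  have := ciInf_le (infConv_bddBelow hm hL x) x
  simpa [infConv] using this

lemma le_infConv {a : ℝ} (x : E3) (h : ∀ y, φ x - φ y ≤ L * dist x y + a) :
    φ x - a ≤ infConv φ L x :=
  le_ciInf fun y => by linarith [h y]

lemma infConv_lip (hm : ∀ y, m ≤ φ y) (hL : 0 ≤ L) (x x' : E3) :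
    |infConv φ L x - infConv φ L x'| ≤ L * dist x x' := by
  have key : ∀ u v : E3, infConv φ L u - infConv φ L v ≤ L * dist u v := by
    intro u v
    have h1 : ∀ y, infConv φ L u - L * dist u v ≤ φ y + L * dist v y := by
      intro y
      have h2 : infConv φ L u ≤ φ y + L * dist u y :=
        ciInf_le (infConv_bddBelow hm hL u) y
      have h3 : dist u y ≤ dist u v + dist v y := dist_triangle u v y
      nlinarith [mul_le_mul_of_nonneg_left h3 hL]
    have h4 : infConv φ L u - L * dist u v ≤ infConv φ L v := le_ciInf h1
    linarith
  rw [abs_le]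
  constructor
  · have := key x' x; rw [dist_comm] at this; linarith
  · linarith [key x x']

end infConv

/-! ### Scaled versions of the dual-norm bounds -/

lemma tsupport_const_mul_subset (r : ℝ) (f : E3 → ℝ) :
    tsupport (fun x => r * f x) ⊆ tsupport f := by
  apply closure_mono
  intro x hx
  simp only [Function.mem_support] at hx ⊢
  intro h; exact hx (by rw [h, mul_zero])

lemma bound0 (μ : SignedMeasure E3) (D : Set E3) (M₀ : ℝ)
    (h0 : ∀ φ : E3 → ℝ, Continuous φ → HasCompactSupport φ → tsupport φ ⊆ D →
      (∀ x, |φ x| ≤ 1) → |sInt μ φ| ≤ M₀)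
    {η : E3 → ℝ} {b : ℝ} (hb : 0 < b) (hc : Continuous η) (hs : HasCompactSupport η)
    (hd : tsupport η ⊆ D) (hη : ∀ x, |η x| ≤ b) : |sInt μ η| ≤ b * M₀ := by
  have h := h0 (fun x => b⁻¹ * η x) (continuous_const.mul hc)
    (hs.mono (fun x hx => by
      simp only [Function.mem_support] at hx ⊢
      intro h'; exact hx (by rw [h', mul_zero])))
    ((tsupport_const_mul_subset _ _).trans hd)
    (fun x => by
      rw [abs_mul, abs_inv, abs_of_pos hb, inv_mul_le_iff₀ hb, mul_one]
      exact hη x)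
  rwa [sInt_const_mul, abs_mul, abs_inv, abs_of_pos hb, inv_mul_le_iff₀ hb] at h

lemma bound1 (μ : SignedMeasure E3) (D : Set E3) (M₁ : ℝ)
    (h1 : ∀ φ : E3 → ℝ, ∀ c₀ c₁ : NNReal, Continuous φ → HasCompactSupport φ →
      tsupport φ ⊆ D → (∀ x, |φ x| ≤ c₀) → LipschitzWith c₁ φ →
      (c₀ : ℝ) + (c₁ : ℝ) ≤ 1 → |sInt μ φ| ≤ M₁)
    {η : E3 → ℝ} {b ℓ : ℝ} (hb : 0 < b) (hℓ : 0 ≤ ℓ)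
    (hc : Continuous η) (hs : HasCompactSupport η)
    (hd : tsupport η ⊆ D) (hη : ∀ x, |η x| ≤ b)
    (hlip : ∀ x y, dist (η x) (η y) ≤ ℓ * dist x y) :
    |sInt μ η| ≤ (b + ℓ) * M₁ := by
  set s : ℝ := b + ℓ with hs_def
  have hspos : 0 < s := by positivity
  have hb' : (0:ℝ) ≤ b / s := by positivity
  have hl' : (0:ℝ) ≤ ℓ / s := by positivity
  have h := h1 (fun x => s⁻¹ * η x) (b / s).toNNReal (ℓ / s).toNNReal
    (continuous_const.mul hc)
    (hs.mono (fun x hx => by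
      simp only [Function.mem_support] at hx ⊢
      intro h'; exact hx (by rw [h', mul_zero])))
    ((tsupport_const_mul_subset _ _).trans hd)
    (fun x => by
      rw [Real.coe_toNNReal _ hb', abs_mul, abs_inv, abs_of_pos hspos]
      rw [div_eq_inv_mul, mul_le_mul_iff_right₀ (by positivity)]
      exact hη x)
    (LipschitzWith.of_dist_le_mul (fun x y => by
      rw [Real.coe_toNNReal _ hl', Real.dist_eq]
      have he : s⁻¹ * η x - s⁻¹ * η y = s⁻¹ * (η x - η y) := by ring
      rw [he, abs_mul, abs_inv, abs_of_pos hspos, div_eq_inv_mul, mul_assoc,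
        mul_le_mul_iff_right₀ (by positivity), ← Real.dist_eq]
      exact hlip x y))
    (by
      rw [Real.coe_toNNReal _ hb', Real.coe_toNNReal _ hl']
      rw [← add_div, hs_def, div_self (by positivity)])
  rwa [sInt_const_mul, abs_mul, abs_inv, abs_of_pos hspos, inv_mul_le_iff₀ hspos] at h

/-! ### Elementary `rpow` interpolation -/

lemma rpow_interp {d δ a : ℝ} (hd : 0 ≤ d) (hδ : 0 < δ) (ha0 : 0 ≤ a) (ha1 : a ≤ 1) :
    d ^ a ≤ δ ^ (a - 1) * d + δ ^ a := by
  rcases le_total d δ with h | h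
  · have h1 : d ^ a ≤ δ ^ a := Real.rpow_le_rpow hd h ha0
    have h2 : 0 ≤ δ ^ (a - 1) * d := mul_nonneg (Real.rpow_nonneg hδ.le _) hd
    linarith
  · have hd0 : 0 < d := lt_of_lt_of_le hδ h
    have h1 : d ^ (a - 1) ≤ δ ^ (a - 1) :=
      Real.rpow_le_rpow_of_nonpos hδ h (by linarith)
    have h2 : d ^ a = d ^ (a - 1) * d := by
      nth_rewrite 1 [show a = a - 1 + 1 by ring]
      rw [Real.rpow_add_one hd0.ne']
    rw [h2]
    have h3 := mul_le_mul_of_nonneg_right h1 hd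
    have h4 : 0 ≤ δ ^ a := Real.rpow_nonneg hδ.le _
    linarith

/-! ### Sup bound for Hölder functions supported in a bounded set -/

lemma holder_sup_bound {φ : E3 → ℝ} {c₁ α : NNReal} {r : ℝ} (hr : 0 ≤ r)
    (hH : HolderWith c₁ α φ) (hsup : tsupport φ ⊆ closedBall 0 r) (x : E3) :
    |φ x| ≤ (c₁ : ℝ) * (2 * r + 1) ^ (α : ℝ) := by
  have hRa : (0:ℝ) ≤ (c₁ : ℝ) * (2 * r + 1) ^ (α : ℝ) := by positivity
  by_cases hx : x ∈ tsupport φ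
  · set y₀ : E3 := ((r + 1, 0), 0) with hy₀def
    have hn : ‖y₀‖ = r + 1 := by
      simp only [hy₀def, Prod.norm_def, Real.norm_eq_abs, abs_zero]
      rw [abs_of_nonneg (by linarith : (0:ℝ) ≤ r + 1),
        max_eq_left (le_max_right _ _), max_eq_left (by linarith)]
    have hy₀ : φ y₀ = 0 := by
      apply image_eq_zero_of_notMem_tsupport
      intro hy
      have h := hsup hy
      rw [mem_closedBall, dist_zero_right, hn] at h
      linarith
    have hxr : ‖x‖ ≤ r := by
      have h := hsup hx
      rwa [mem_closedBall, dist_zero_right] at h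
    have hdist : dist x y₀ ≤ 2 * r + 1 := by
      calc dist x y₀ ≤ dist x 0 + dist 0 y₀ := dist_triangle _ _ _
        _ = ‖x‖ + ‖y₀‖ := by rw [dist_zero_right, dist_zero_left]
        _ ≤ r + (r + 1) := by rw [hn]; linarith
        _ = 2 * r + 1 := by ring
    have h1 : dist (φ x) (φ y₀) ≤ (c₁ : ℝ) * dist x y₀ ^ (α : ℝ) := hH.dist_le x y₀
    have h2 : dist x y₀ ^ (α : ℝ) ≤ (2 * r + 1) ^ (α : ℝ) :=
      Real.rpow_le_rpow dist_nonneg hdist α.coe_nonneg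
    calc |φ x| = dist (φ x) (φ y₀) := by rw [Real.dist_eq, hy₀, sub_zero]
      _ ≤ (c₁ : ℝ) * dist x y₀ ^ (α : ℝ) := h1
      _ ≤ (c₁ : ℝ) * (2 * r + 1) ^ (α : ℝ) :=
          mul_le_mul_of_nonneg_left h2 c₁.coe_nonneg
  · rw [image_eq_zero_of_notMem_tsupport hx, abs_zero]; exact hRa

/-! ### The per-δ estimate -/

lemma key_est (μ : SignedMeasure E3) (D : Set E3) (M₀ M₁ : ℝ)
    (hM₀ : 0 ≤ M₀) (hM₁ : 0 ≤ M₁) (α : NNReal) (hα0 : 0 < α) (hα1 : α < 1)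
    (h0 : ∀ φ : E3 → ℝ, Continuous φ → HasCompactSupport φ → tsupport φ ⊆ D →
      (∀ x, |φ x| ≤ 1) → |sInt μ φ| ≤ M₀)
    (h1 : ∀ φ : E3 → ℝ, ∀ c₀ c₁ : NNReal, Continuous φ → HasCompactSupport φ →
      tsupport φ ⊆ D → (∀ x, |φ x| ≤ c₀) → LipschitzWith c₁ φ →
      (c₀ : ℝ) + (c₁ : ℝ) ≤ 1 → |sInt μ φ| ≤ M₁)
    (φ : E3 → ℝ) (c₀ c₁ : NNReal) (hφc : Continuous φ) (hφs : HasCompactSupport φ)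
    (hφD : tsupport φ ⊆ D) (hφb : ∀ x, |φ x| ≤ c₀) (hφH : HolderWith c₁ α φ)
    (hc : (c₀ : ℝ) + (c₁ : ℝ) ≤ 1) (hc₁ : 0 < (c₁ : ℝ))
    (R : ℝ) (hR : 1 ≤ R) (hφR : ∀ x, |φ x| ≤ (c₁ : ℝ) * R ^ (α : ℝ))
    (δ : ℝ) (hδ0 : 0 < δ) (hδ1 : δ ≤ 1) :
    |sInt μ φ| ≤ (R + 2) * M₁ * δ ^ ((α : ℝ) - 1) + 2 * M₀ * δ ^ (α : ℝ) := by
  have hα1' : (α : ℝ) ≤ 1 := by exact_mod_cast hα1.le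
  have hα0' : (0 : ℝ) ≤ (α : ℝ) := α.coe_nonneg
  set L : ℝ := (c₁ : ℝ) * δ ^ ((α : ℝ) - 1) with hLdef
  set a : ℝ := (c₁ : ℝ) * δ ^ (α : ℝ) with hadef
  have hδpow1 : 0 < δ ^ ((α : ℝ) - 1) := Real.rpow_pos_of_pos hδ0 _
  have hδpow2 : 0 < δ ^ (α : ℝ) := Real.rpow_pos_of_pos hδ0 _
  have hL : 0 ≤ L := by positivity
  have ha : 0 < a := by positivity
  have hm : ∀ y, -(c₀ : ℝ) ≤ φ y := fun y => (abs_le.1 (hφb y)).1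
  set F : E3 → ℝ := infConv φ L with hFdef
  have hFle : ∀ x, F x ≤ φ x := fun x => infConv_le hm hL x
  have hFge : ∀ x, φ x - a ≤ F x := by
    intro x
    apply le_infConv
    intro y
    have hd1 : φ x - φ y ≤ |φ x - φ y| := le_abs_self _
    have hd2 : |φ x - φ y| ≤ (c₁ : ℝ) * dist x y ^ (α : ℝ) := by
      rw [← Real.dist_eq]; exact hφH.dist_le x y
    have hd3 : dist x y ^ (α : ℝ) ≤ δ ^ ((α : ℝ) - 1) * dist x y + δ ^ (α : ℝ) :=
      rpow_interp dist_nonneg hδ0 hα0' hα1'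
    have hd4 := mul_le_mul_of_nonneg_left hd3 c₁.coe_nonneg
    calc φ x - φ y ≤ (c₁ : ℝ) * dist x y ^ (α : ℝ) := hd1.trans hd2
      _ ≤ (c₁ : ℝ) * (δ ^ ((α : ℝ) - 1) * dist x y + δ ^ (α : ℝ)) := hd4
      _ = L * dist x y + a := by rw [hLdef, hadef]; ring
  have hFlip : ∀ x x', |F x - F x'| ≤ L * dist x x' := infConv_lip hm hL
  set ψ : E3 → ℝ := fun x => stf a (F x) with hψdef
  have hψφ : ∀ x, |ψ x - φ x| ≤ 2 * a := by
    intro x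
    have t1 : |ψ x - F x| ≤ a := stf_sub_le ha.le
    have t2 : |F x - φ x| ≤ a := by
      rw [abs_le]; constructor <;> [linarith [hFge x]; linarith [hFle x]]
    calc |ψ x - φ x| ≤ |ψ x - F x| + |F x - φ x| := abs_sub_le _ _ _
      _ ≤ 2 * a := by linarith
  have hψab : ∀ x, |ψ x| ≤ |φ x| := fun x => stf_abs_le ha.le (hFge x) (hFle x)
  have hψlip : ∀ x y, dist (ψ x) (ψ y) ≤ (2 * L) * dist x y := by
    intro x y
    rw [Real.dist_eq]
    calc |ψ x - ψ y| ≤ 2 * |F x - F y| := stf_lip a (F x) (F y)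
      _ ≤ 2 * (L * dist x y) := by linarith [hFlip x y, abs_nonneg (F x - F y)]
      _ = (2 * L) * dist x y := by ring
  have hψsupp : Function.support ψ ⊆ tsupport φ := by
    intro x hx
    by_contra hxn
    have hφ0 : φ x = 0 := image_eq_zero_of_notMem_tsupport hxn
    have hFa : |F x| ≤ a := by
      rw [abs_le]
      constructor
      · have := hFge x; rw [hφ0] at this; linarith
      · have := hFle x; rw [hφ0] at this; linarith
    exact hx (stf_eq_zero hFa)
  have hψc : Continuous ψ := by
    have : LipschitzWith (2 * L).toNNReal ψ :=
      LipschitzWith.of_dist_le_mul (fun x y => by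
        rw [Real.coe_toNNReal _ (by positivity : (0:ℝ) ≤ 2 * L)]
        exact hψlip x y)
    exact this.continuous
  have hψts : tsupport ψ ⊆ tsupport φ := closure_minimal hψsupp (isClosed_tsupport φ)
  have hψs : HasCompactSupport ψ := hφs.of_isClosed_subset (isClosed_tsupport ψ) hψts
  have hψD : tsupport ψ ⊆ D := hψts.trans hφD
  have hψb : ∀ x, |ψ x| ≤ (c₁ : ℝ) * R ^ (α : ℝ) := fun x => (hψab x).trans (hφR x)
  have hRpos : (0:ℝ) < R := by linarith
  have hbpos : (0:ℝ) < (c₁ : ℝ) * R ^ (α : ℝ) :=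
    mul_pos hc₁ (Real.rpow_pos_of_pos hRpos _)
  have hIψ : |sInt μ ψ| ≤ ((c₁ : ℝ) * R ^ (α : ℝ) + 2 * L) * M₁ :=
    bound1 μ D M₁ h1 hbpos (by positivity) hψc hψs hψD hψb hψlip
  have hηc : Continuous (fun x => φ x - ψ x) := hφc.sub hψc
  have hηts : tsupport (fun x => φ x - ψ x) ⊆ tsupport φ ∪ tsupport ψ := by
    refine closure_minimal ?_ ((isClosed_tsupport φ).union (isClosed_tsupport ψ))
    intro x hx
    rw [Function.mem_support] at hx
    by_contra hxn
    rw [Set.mem_union] at hxn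
    push_neg at hxn
    exact hx (by
      rw [image_eq_zero_of_notMem_tsupport hxn.1,
        image_eq_zero_of_notMem_tsupport hxn.2, sub_zero])
  have hηs : HasCompactSupport (fun x => φ x - ψ x) :=
    IsCompact.of_isClosed_subset (hφs.union hψs) (isClosed_tsupport _) hηts
  have hηD : tsupport (fun x => φ x - ψ x) ⊆ D :=
    hηts.trans (Set.union_subset hφD hψD)
  have hηb : ∀ x, |φ x - ψ x| ≤ 2 * a := fun x => by
    rw [abs_sub_comm]; exact hψφ x
  have hIη : |sInt μ (fun x => φ x - ψ x)| ≤ (2 * a) * M₀ :=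
    bound0 μ D M₀ h0 (by positivity) hηc hηs hηD hηb
  have hadd : sInt μ φ = sInt μ ψ + sInt μ (fun x => φ x - ψ x) := by
    have h := sInt_add μ hψc hψs hηc hηs
    have he : (fun x => ψ x + (φ x - ψ x)) = φ := funext fun x => by ring
    rw [he] at h
    exact h
  have hc₁le : (c₁ : ℝ) ≤ 1 := by linarith [c₀.coe_nonneg]
  have hRα : R ^ (α : ℝ) ≤ R := by
    have h := Real.rpow_le_rpow_of_exponent_le hR hα1'
    rwa [Real.rpow_one] at h
  have hδ1' : 1 ≤ δ ^ ((α : ℝ) - 1) :=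
    Real.one_le_rpow_of_pos_of_le_one_of_nonpos hδ0 hδ1 (by linarith)
  have hnum1 : (c₁ : ℝ) * R ^ (α : ℝ) + 2 * L ≤ (R + 2) * δ ^ ((α : ℝ) - 1) := by
    have p1 : (c₁ : ℝ) * R ^ (α : ℝ) ≤ 1 * R ^ (α : ℝ) :=
      mul_le_mul_of_nonneg_right hc₁le (Real.rpow_nonneg hRpos.le _)
    have p2 : R * 1 ≤ R * δ ^ ((α : ℝ) - 1) :=
      mul_le_mul_of_nonneg_left hδ1' hRpos.le
    have p3 : (c₁ : ℝ) * δ ^ ((α : ℝ) - 1) ≤ 1 * δ ^ ((α : ℝ) - 1) :=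
      mul_le_mul_of_nonneg_right hc₁le hδpow1.le
    rw [hLdef]
    nlinarith [hRα]
  have hnum2 : 2 * a ≤ 2 * δ ^ (α : ℝ) := by
    have p4 : (c₁ : ℝ) * δ ^ (α : ℝ) ≤ 1 * δ ^ (α : ℝ) :=
      mul_le_mul_of_nonneg_right hc₁le hδpow2.le
    rw [hadef]; linarith
  calc |sInt μ φ| ≤ |sInt μ ψ| + |sInt μ (fun x => φ x - ψ x)| := by
        rw [hadd]; exact abs_add_le _ _
    _ ≤ ((c₁ : ℝ) * R ^ (α : ℝ) + 2 * L) * M₁ + (2 * a) * M₀ := add_le_add hIψ hIη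
    _ ≤ ((R + 2) * δ ^ ((α : ℝ) - 1)) * M₁ + (2 * δ ^ (α : ℝ)) * M₀ :=
        add_le_add (mul_le_mul_of_nonneg_right hnum1 hM₁)
          (mul_le_mul_of_nonneg_right hnum2 hM₀)
    _ = (R + 2) * M₁ * δ ^ ((α : ℝ) - 1) + 2 * M₀ * δ ^ (α : ℝ) := by ring

end JSAux

open JSAux Metric in
/-- Jerrard–Soner interpolation inequality for dual Hölder norms: for a bounded open
`D ⊆ ℝ³` and `0 < α < 1` there is `C = C(α,D)` such that any finite signed Radon
measure `μ` on `D` with `‖μ‖_{(C⁰_c)*} ≤ M₀` and `‖μ‖_{(C^{0,1}_c)*} ≤ M₁` satisfies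
`‖μ‖_{(C^{0,α}_c)*} ≤ C M₀^{1−α} M₁^α`. -/
theorem stmt17 (D : Set ((ℝ × ℝ) × ℝ)) (hD : IsOpen D) (hDb : Bornology.IsBounded D)
    (α : NNReal) (hα0 : 0 < α) (hα1 : α < 1) :
    ∃ C : ℝ, 0 < C ∧
      ∀ (μ : SignedMeasure ((ℝ × ℝ) × ℝ)) (M₀ M₁ : ℝ), 0 ≤ M₀ → 0 ≤ M₁ →
        μ.totalVariation Dᶜ = 0 →
        (∀ φ : (ℝ × ℝ) × ℝ → ℝ, Continuous φ → HasCompactSupport φ → tsupport φ ⊆ D →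
          (∀ x, |φ x| ≤ 1) → |sInt μ φ| ≤ M₀) →
        (∀ φ : (ℝ × ℝ) × ℝ → ℝ, ∀ c₀ c₁ : NNReal, Continuous φ → HasCompactSupport φ →
          tsupport φ ⊆ D → (∀ x, |φ x| ≤ c₀) → LipschitzWith c₁ φ →
          (c₀ : ℝ) + (c₁ : ℝ) ≤ 1 → |sInt μ φ| ≤ M₁) →
        ∀ φ : (ℝ × ℝ) × ℝ → ℝ, ∀ c₀ c₁ : NNReal, Continuous φ → HasCompactSupport φ →
          tsupport φ ⊆ D → (∀ x, |φ x| ≤ c₀) → HolderWith c₁ α φ →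
          (c₀ : ℝ) + (c₁ : ℝ) ≤ 1 →
          |sInt μ φ| ≤ C * M₀ ^ (1 - (α : ℝ)) * M₁ ^ (α : ℝ) := by
  obtain ⟨r0, hr0⟩ := hDb.subset_closedBall 0
  set r : ℝ := max r0 0 with hrdef
  have hr : 0 ≤ r := le_max_right _ _
  have hDr : D ⊆ closedBall 0 r :=
    hr0.trans (closedBall_subset_closedBall (le_max_left _ _))
  set R : ℝ := 2 * r + 1 with hRdef
  have hR1 : 1 ≤ R := by rw [hRdef]; linarith
  refine ⟨R + 4, by linarith, ?_⟩
  intro μ M₀ M₁ hM₀ hM₁ _ h0 h1 φ c₀ c₁ hφc hφs hφD hφb hφH hc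
  have hα0' : (0:ℝ) < (α:ℝ) := by exact_mod_cast hα0
  have hα1' : (α:ℝ) < 1 := by exact_mod_cast hα1
  have hRHS0 : 0 ≤ (R + 4) * M₀ ^ (1 - (α:ℝ)) * M₁ ^ (α:ℝ) :=
    mul_nonneg (mul_nonneg (by linarith) (Real.rpow_nonneg hM₀ _))
      (Real.rpow_nonneg hM₁ _)
  have hφR : ∀ x, |φ x| ≤ (c₁:ℝ) * R ^ (α:ℝ) := by
    intro x
    have h := holder_sup_bound hr hφH (hφD.trans hDr) x
    rwa [← hRdef] at h
  rcases eq_or_lt_of_le c₁.coe_nonneg with hc₁ | hc₁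
  · have hφ0 : φ = fun _ => (0:ℝ) := funext fun x => by
      have h := hφR x
      rw [← hc₁, zero_mul] at h
      exact abs_eq_zero.mp (le_antisymm h (abs_nonneg _))
    have hz : sInt μ (fun _ => (0:ℝ)) = 0 := by simp [sInt]
    rw [hφ0, hz, abs_zero]
    exact hRHS0
  · have key : ∀ δ : ℝ, 0 < δ → δ ≤ 1 →
        |sInt μ φ| ≤ (R + 2) * M₁ * δ ^ ((α:ℝ) - 1) + 2 * M₀ * δ ^ (α:ℝ) :=
      fun δ hδ0 hδ1 => key_est μ D M₀ M₁ hM₀ hM₁ α hα0 hα1 h0 h1 φ c₀ c₁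
        hφc hφs hφD hφb hφH hc hc₁ R hR1 hφR δ hδ0 hδ1
    rcases le_or_gt M₁ M₀ with hM | hM
    · rcases eq_or_lt_of_le hM₁ with hM₁0 | hM₁0
      · -- M₁ = 0
        rw [← hM₁0, Real.zero_rpow (ne_of_gt hα0'), mul_zero]
        refine le_of_forall_pos_le_add ?_
        intro ε hε
        set t : ℝ := (ε / (2 * M₀ + 1)) ^ ((α:ℝ)⁻¹) with htdef
        have ht : 0 < t := Real.rpow_pos_of_pos (by positivity) _
        set δ : ℝ := min t 1 with hδdef
        have hδ0 : 0 < δ := lt_min ht one_pos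
        have h := key δ hδ0 (min_le_right _ _)
        rw [← hM₁0, mul_zero, zero_mul, zero_add] at h
        have hδα : δ ^ (α:ℝ) ≤ ε / (2 * M₀ + 1) := by
          have q1 : δ ^ (α:ℝ) ≤ t ^ (α:ℝ) :=
            Real.rpow_le_rpow hδ0.le (min_le_left _ _) α.coe_nonneg
          have q2 : t ^ (α:ℝ) = ε / (2 * M₀ + 1) := by
            rw [htdef, ← Real.rpow_mul (by positivity),
              inv_mul_cancel₀ (ne_of_gt hα0'), Real.rpow_one]
          linarith
        have q3 : 2 * M₀ * δ ^ (α:ℝ) ≤ 2 * M₀ * (ε / (2 * M₀ + 1)) :=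
          mul_le_mul_of_nonneg_left hδα (by linarith)
        have q4 : 2 * M₀ * (ε / (2 * M₀ + 1)) ≤ ε := by
          rw [mul_div_assoc', div_le_iff₀ (by linarith)]
          nlinarith
        linarith
      · -- 0 < M₁ ≤ M₀
        have hM₀0 : 0 < M₀ := lt_of_lt_of_le hM₁0 hM
        set δ : ℝ := M₁ / M₀ with hδdef
        have hδ0 : 0 < δ := div_pos hM₁0 hM₀0
        have hδ1 : δ ≤ 1 := (div_le_one hM₀0).mpr hM
        have h := key δ hδ0 hδ1
        have q1 : M₁ ^ (α:ℝ) = M₁ * M₁ ^ ((α:ℝ) - 1) := by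
          nth_rewrite 1 [show (α:ℝ) = 1 + ((α:ℝ) - 1) by ring]
          rw [Real.rpow_add hM₁0, Real.rpow_one]
        have hM₀pow : (0:ℝ) < M₀ ^ ((α:ℝ) - 1) := Real.rpow_pos_of_pos hM₀0 _
        have hM₀pow2 : (0:ℝ) < M₀ ^ (α:ℝ) := Real.rpow_pos_of_pos hM₀0 _
        have e1 : M₁ * δ ^ ((α:ℝ) - 1) = M₀ ^ (1 - (α:ℝ)) * M₁ ^ (α:ℝ) := by
          rw [hδdef, Real.div_rpow hM₁ hM₀0.le,
            show (1:ℝ) - (α:ℝ) = -((α:ℝ) - 1) by ring, Real.rpow_neg hM₀0.le, q1]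
          field_simp
        have e2 : M₀ * δ ^ (α:ℝ) = M₀ ^ (1 - (α:ℝ)) * M₁ ^ (α:ℝ) := by
          rw [hδdef, Real.div_rpow hM₁ hM₀0.le, Real.rpow_sub hM₀0, Real.rpow_one]
          field_simp
        calc |sInt μ φ| ≤ (R + 2) * M₁ * δ ^ ((α:ℝ) - 1) + 2 * M₀ * δ ^ (α:ℝ) := h
          _ = (R + 2) * (M₁ * δ ^ ((α:ℝ) - 1)) + 2 * (M₀ * δ ^ (α:ℝ)) := by ring
          _ = (R + 4) * M₀ ^ (1 - (α:ℝ)) * M₁ ^ (α:ℝ) := by rw [e1, e2]; ring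
    · -- M₀ < M₁
      have hc₀1 : (c₀:ℝ) ≤ 1 := by linarith [c₁.coe_nonneg]
      have hI : |sInt μ φ| ≤ M₀ :=
        h0 φ hφc hφs hφD (fun x => (hφb x).trans hc₀1)
      rcases eq_or_lt_of_le hM₀ with hM₀0 | hM₀0
      · rw [← hM₀0, Real.zero_rpow (by linarith : (1:ℝ) - (α:ℝ) ≠ 0), mul_zero, zero_mul]
        rw [← hM₀0] at hI
        exact hI
      · have q1 : M₀ ^ (1 - (α:ℝ)) * M₀ ^ (α:ℝ) = M₀ := by
          rw [← Real.rpow_add hM₀0]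
          norm_num
        have q2 : M₀ ^ (α:ℝ) ≤ M₁ ^ (α:ℝ) :=
          Real.rpow_le_rpow hM₀ hM.le α.coe_nonneg
        have q3 : (0:ℝ) < M₀ ^ (1 - (α:ℝ)) := Real.rpow_pos_of_pos hM₀0 _
        have q4 : M₀ ^ (1 - (α:ℝ)) * M₀ ^ (α:ℝ) ≤ (R + 4) * M₀ ^ (1 - (α:ℝ)) * M₁ ^ (α:ℝ) := by
          have := mul_le_mul_of_nonneg_left q2 q3.le
          nlinarith [Real.rpow_pos_of_pos (lt_of_le_of_lt hM₀ hM) (α:ℝ)]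
        rw [q1] at q4
        exact hI.trans q4
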